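/- arXiv:2506.23381 — 2 statements merged into one kernel-verified Lean document; each statement's English description precedes it below -/
import Mathlib

section
/- Let H be a real Hilbert space, and let H = C ⊕ Λ be an orthogonal decomposition into closed subspaces C and Λ with Λ finite-dimensional. Let L ⊆ H be a subspace, and define γ := sup over λ ∈ Λ with ‖λ‖ = 1 of inf over λ_h ∈ L with λ − λ_h ∈ C of ‖λ − λ_h‖ (taking the inf to be +∞ if no such λ_h exists; assume γ < ∞). Then for every g ∈ H orthogonal to L, and every ξ ∈ H, one has ⟨g, ξ⟩ ≤ √(1 + γ²) · (sup over c ∈ C with ‖c‖ = 1 of ⟨g, c⟩) · ‖ξ‖. -/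
open RealInnerProductSpace

/-- Abstract form of the topological-correction bound: with `H = C ⊕ Λ` an orthogonal
decomposition (`Λ = Cᗮ` finite-dimensional), `L ⊆ H` a subspace, and
`γ = sup_{λ ∈ Λ, ‖λ‖=1} inf {‖λ − λ_h‖ : λ_h ∈ L, λ − λ_h ∈ C}`, every `g ⊥ L` satisfies
`⟪g, ξ⟫ ≤ √(1+γ²) · sup_{c ∈ C, ‖c‖=1} ⟪g, c⟫ · ‖ξ‖`. -/
theorem stmt_3 {H : Type*} [NormedAddCommGroup H] [InnerProductSpace ℝ H] [CompleteSpace H]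
    (C Λ L : Submodule ℝ H) (hC : IsClosed (C : Set H)) (hΛ : Λ = Cᗮ)
    [FiniteDimensional ℝ Λ]
    (hne : ∀ l ∈ Λ, ∃ lh ∈ L, l - lh ∈ C)
    (γ : ℝ)
    (hγ : γ = sSup {r : ℝ | ∃ l ∈ Λ, ‖l‖ = 1 ∧
        r = sInf {s : ℝ | ∃ lh ∈ L, l - lh ∈ C ∧ s = ‖l - lh‖}})
    (g ξ : H) (hg : ∀ l ∈ L, ⟪g, l⟫ = 0) :
    ⟪g, ξ⟫ ≤ Real.sqrt (1 + γ ^ 2) *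
      sSup {r : ℝ | ∃ c ∈ C, ‖c‖ = 1 ∧ r = ⟪g, c⟫} * ‖ξ‖ := by
  classical
  set T : Set ℝ := {r : ℝ | ∃ c ∈ C, ‖c‖ = 1 ∧ r = ⟪g, c⟫} with hT
  set S := sSup T with hSdef
  have hTbdd : BddAbove T := by
    refine ⟨‖g‖, ?_⟩
    rintro r ⟨c, hc, hc1, rfl⟩
    calc ⟪g, c⟫ ≤ ‖g‖ * ‖c‖ := real_inner_le_norm g c
      _ = ‖g‖ := by rw [hc1, mul_one]
  have hS0 : 0 ≤ S := by
    by_cases hCbot : ∃ c ∈ C, c ≠ (0:H)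
    · obtain ⟨c, hc, hc0⟩ := hCbot
      have hu : ‖(‖c‖⁻¹ • c)‖ = 1 := by
        rw [norm_smul, norm_inv, norm_norm]
        field_simp [norm_ne_zero_iff.2 hc0]
      have h1 : ⟪g, ‖c‖⁻¹ • c⟫ ≤ S :=
        le_csSup hTbdd ⟨_, C.smul_mem _ hc, hu, rfl⟩
      have h2 : ⟪g, -(‖c‖⁻¹ • c)⟫ ≤ S :=
        le_csSup hTbdd ⟨_, neg_mem (C.smul_mem _ hc), by rw [norm_neg]; exact hu, rfl⟩
      rw [inner_neg_right] at h2
      linarith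
    · push_neg at hCbot
      have hTe : T = ∅ := by
        ext r
        simp only [hT, Set.mem_setOf_eq, Set.mem_empty_iff_false, iff_false]
        rintro ⟨c, hc, hc1, -⟩
        rw [hCbot c hc] at hc1
        simp at hc1
      rw [hSdef, hTe, Real.sSup_empty]
  -- inner bound on C
  have hCS : ∀ c ∈ C, ⟪g, c⟫ ≤ S * ‖c‖ := by
    intro c hc
    rcases eq_or_ne c 0 with rfl | hc0
    · simp
    · have hu : ‖(‖c‖⁻¹ • c)‖ = 1 := by
        rw [norm_smul, norm_inv, norm_norm]
        field_simp [norm_ne_zero_iff.2 hc0]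
      have h1 : ⟪g, ‖c‖⁻¹ • c⟫ ≤ S :=
        le_csSup hTbdd ⟨_, C.smul_mem _ hc, hu, rfl⟩
      have hcn : (0:ℝ) < ‖c‖ := norm_pos_iff.2 hc0
      have : ⟪g, c⟫ = ‖c‖ * ⟪g, ‖c‖⁻¹ • c⟫ := by
        rw [real_inner_smul_right]
        field_simp
      rw [this, mul_comm S ‖c‖]
      exact mul_le_mul_of_nonneg_left h1 hcn.le
  -- bddAbove of the γ set
  have hΓbdd : BddAbove {r : ℝ | ∃ l ∈ Λ, ‖l‖ = 1 ∧
      r = sInf {s : ℝ | ∃ lh ∈ L, l - lh ∈ C ∧ s = ‖l - lh‖}} := by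
    set n := Module.finrank ℝ Λ with hn
    let b : Module.Basis (Fin n) ℝ Λ := Module.finBasis ℝ Λ
    choose f hfL hfC using fun i : Fin n => hne ((b i : H)) (b i).2
    set K : Fin n → ℝ := fun i => ‖LinearMap.toContinuousLinearMap (b.coord i)‖ with hK
    refine ⟨∑ i, K i * ‖(b i : H) - f i‖, ?_⟩
    rintro r ⟨l, hl, hl1, rfl⟩
    set x : Λ := ⟨l, hl⟩ with hx
    have hxn : ‖x‖ = 1 := hl1
    set a : Fin n → ℝ := fun i => b.repr x i with ha
    have hrep : l = ∑ i, a i • (b i : H) := by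
      have := b.sum_repr x
      have h2 := congrArg (Subtype.val) this
      simp only [AddSubmonoidClass.coe_finset_sum, SetLike.val_smul] at h2
      exact h2.symm
    set lh : H := ∑ i, a i • f i with hlh
    have hlhL : lh ∈ L := Submodule.sum_mem _ fun i _ => L.smul_mem _ (hfL i)
    have hdiff : l - lh = ∑ i, a i • ((b i : H) - f i) := by
      rw [hrep, hlh, ← Finset.sum_sub_distrib]
      simp [smul_sub]
    have hdC : l - lh ∈ C := by
      rw [hdiff]
      exact Submodule.sum_mem _ fun i _ => C.smul_mem _ (hfC i)
    have hnorm : ‖l - lh‖ ≤ ∑ i, K i * ‖(b i : H) - f i‖ := by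
      rw [hdiff]
      refine (norm_sum_le _ _).trans (Finset.sum_le_sum fun i _ => ?_)
      rw [norm_smul]
      refine mul_le_mul_of_nonneg_right ?_ (norm_nonneg _)
      have := (LinearMap.toContinuousLinearMap (b.coord i)).le_opNorm x
      simpa [hxn] using this
    refine le_trans (csInf_le ⟨0, ?_⟩ ⟨lh, hlhL, hdC, rfl⟩) hnorm
    rintro s ⟨lh', -, -, rfl⟩
    positivity
  -- inner bound on Λ
  have hΛS : ∀ l ∈ Λ, ⟪g, l⟫ ≤ S * (γ * ‖l‖) := by
    intro l hl
    rcases eq_or_ne l 0 with rfl | hl0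
    · simp
    · have hln : (0:ℝ) < ‖l‖ := norm_pos_iff.2 hl0
      set u : H := ‖l‖⁻¹ • l with hu
      have huΛ : u ∈ Λ := Λ.smul_mem _ hl
      have hun : ‖u‖ = 1 := by
        rw [hu, norm_smul, norm_inv, norm_norm]
        field_simp
      set Iset : Set ℝ := {s : ℝ | ∃ lh ∈ L, u - lh ∈ C ∧ s = ‖u - lh‖} with hIset
      have hIne : Iset.Nonempty := by
        obtain ⟨lh, hlhL, hlhC⟩ := hne u huΛ
        exact ⟨‖u - lh‖, lh, hlhL, hlhC, rfl⟩
      have hIγ : sInf Iset ≤ γ := by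
        rw [hγ]
        exact le_csSup hΓbdd ⟨u, huΛ, hun, rfl⟩
      have hgu : ∀ s ∈ Iset, ⟪g, u⟫ ≤ S * s := by
        rintro s ⟨lh, hlhL, hlhC, rfl⟩
        have : ⟪g, u⟫ = ⟪g, u - lh⟫ := by
          rw [inner_sub_right, hg lh hlhL, sub_zero]
        rw [this]
        exact hCS _ hlhC
      have hguI : ⟪g, u⟫ ≤ S * sInf Iset := by
        rcases hS0.lt_or_eq with hSpos | hSzero
        · rw [mul_comm, ← div_le_iff₀ hSpos]
          refine le_csInf hIne fun s hs => ?_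
          rw [div_le_iff₀ hSpos, mul_comm]
          exact hgu s hs
        · obtain ⟨s, hs⟩ := hIne
          have := hgu s hs
          rw [← hSzero] at this ⊢
          simpa using this
      have hrw : ⟪g, l⟫ = ‖l‖ * ⟪g, u⟫ := by
        rw [hu, real_inner_smul_right]
        field_simp
      calc ⟪g, l⟫ = ‖l‖ * ⟪g, u⟫ := hrw
        _ ≤ ‖l‖ * (S * sInf Iset) := mul_le_mul_of_nonneg_left hguI hln.le
        _ ≤ ‖l‖ * (S * γ) :=
            mul_le_mul_of_nonneg_left (mul_le_mul_of_nonneg_left hIγ hS0) hln.le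
        _ = S * (γ * ‖l‖) := by ring
  -- decomposition of ξ
  haveI : CompleteSpace C := hC.completeSpace_coe
  obtain ⟨c, hc, lam, hlam, hxi⟩ := Submodule.exists_add_mem_mem_orthogonal (K := C) ξ
  have hlamΛ : lam ∈ Λ := hΛ ▸ hlam
  have hortho : ⟪c, lam⟫ = 0 := hlam c hc
  have hnormsq : ‖ξ‖ ^ 2 = ‖c‖ ^ 2 + ‖lam‖ ^ 2 := by
    rw [hxi, norm_add_sq_real, hortho]
    ring
  have hsplit : ⟪g, ξ⟫ = ⟪g, c⟫ + ⟪g, lam⟫ := by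
    rw [hxi, inner_add_right]
  have hstep : ⟪g, ξ⟫ ≤ S * (‖c‖ + γ * ‖lam‖) := by
    rw [hsplit, mul_add]
    exact add_le_add (hCS c hc) (hΛS lam hlamΛ)
  have hs1 : Real.sqrt (1 + γ ^ 2) ^ 2 = 1 + γ ^ 2 :=
    Real.sq_sqrt (by positivity)
  have hs1n : 0 ≤ Real.sqrt (1 + γ ^ 2) := Real.sqrt_nonneg _
  have hcs : ‖c‖ + γ * ‖lam‖ ≤ Real.sqrt (1 + γ ^ 2) * ‖ξ‖ := by
    nlinarith [sq_nonneg (γ * ‖c‖ - ‖lam‖), norm_nonneg ξ, mul_nonneg hs1n (norm_nonneg ξ),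
      sq_nonneg (Real.sqrt (1 + γ ^ 2) * ‖ξ‖ - ‖c‖ - γ * ‖lam‖),
      sq_nonneg (Real.sqrt (1 + γ ^ 2) * ‖ξ‖ + ‖c‖ + γ * ‖lam‖)]
  calc ⟪g, ξ⟫ ≤ S * (‖c‖ + γ * ‖lam‖) := hstep
    _ ≤ S * (Real.sqrt (1 + γ ^ 2) * ‖ξ‖) := mul_le_mul_of_nonneg_left hcs hS0
    _ = Real.sqrt (1 + γ ^ 2) * S * ‖ξ‖ := by ring
end

section
/- Let H be a real Hilbert space, u, g ∈ H, V a closed subspace of H with u ∈ V, and W = V^⊥. Suppose additionally A is a bound such that sup over unit w ∈ W of ⟨g, w⟩ ≤ B. Then ‖u − g‖² ≤ (sup over unit v ∈ V of ⟨u − g, v⟩)² + B². In particular with V = ∇H¹_{Γ_D} this yields the generalized Prager–Synge estimate: the squared error is bounded by the square of the conforming residual functional norm plus the square of the bound on the nonconformity functional. -/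
open RealInnerProductSpace
open Submodule

private lemma inner_proj_sq {H : Type*} [NormedAddCommGroup H] [InnerProductSpace ℝ H]
    (K : Submodule ℝ H) [HasOrthogonalProjection K] (x : H) :
    ⟪x, ((orthogonalProjection K x : H))⟫ = ‖((orthogonalProjection K x : H))‖ ^ 2 := by
  set p : H := (orthogonalProjection K x : H) with hp
  have h1 : ⟪x - p, p⟫ = 0 := by
    have := (sub_starProjection_mem_orthogonal (K := K) x) p
      (orthogonalProjection K x).2
    rwa [real_inner_comm] at this
  have h2 : ⟪x, p⟫ = ⟪x - p, p⟫ + ⟪p, p⟫ := by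
    rw [← inner_add_left, sub_add_cancel]
  rw [h2, h1, zero_add, real_inner_self_eq_norm_sq]

private lemma proj_norm_le_sSup {H : Type*} [NormedAddCommGroup H] [InnerProductSpace ℝ H]
    (K : Submodule ℝ H) [HasOrthogonalProjection K] (x : H)
    (h : (orthogonalProjection K x : H) ≠ 0) :
    ‖(orthogonalProjection K x : H)‖ ≤
      sSup {r : ℝ | ∃ v ∈ K, ‖v‖ = 1 ∧ r = ⟪x, v⟫} := by
  set p : H := (orthogonalProjection K x : H) with hp
  have hbdd : BddAbove {r : ℝ | ∃ v ∈ K, ‖v‖ = 1 ∧ r = ⟪x, v⟫} := by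
    refine ⟨‖x‖, ?_⟩
    rintro r ⟨v, -, hv1, rfl⟩
    calc ⟪x, v⟫ ≤ ‖x‖ * ‖v‖ := real_inner_le_norm x v
      _ = ‖x‖ := by rw [hv1, mul_one]
  have hpn : ‖p‖ ≠ 0 := norm_ne_zero_iff.mpr h
  have hmem : ‖p‖ ∈ {r : ℝ | ∃ v ∈ K, ‖v‖ = 1 ∧ r = ⟪x, v⟫} := by
    refine ⟨‖p‖⁻¹ • p, K.smul_mem _ (orthogonalProjection K x).2, ?_, ?_⟩
    · rw [norm_smul, norm_inv, norm_norm, inv_mul_cancel₀ hpn]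
    · rw [real_inner_smul_right, inner_proj_sq K x, ← hp, sq]
      field_simp
  exact le_csSup hbdd hmem

/-- Generalized Prager–Synge estimate, abstract form: if `u ∈ V` (closed subspace) and
the nonconformity functional is bounded, `sup_{w ∈ Vᗮ, ‖w‖=1} ⟪g, w⟫ ≤ B`, then
`‖u − g‖² ≤ (sup_{v ∈ V, ‖v‖=1} ⟪u − g, v⟫)² + B²`. -/
theorem stmt_4 {H : Type*} [NormedAddCommGroup H] [InnerProductSpace ℝ H] [CompleteSpace H]
    (V : Submodule ℝ H) (hV : IsClosed (V : Set H)) (u g : H) (hu : u ∈ V) (B : ℝ)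
    (hB : sSup {r : ℝ | ∃ w ∈ Vᗮ, ‖w‖ = 1 ∧ r = ⟪g, w⟫} ≤ B) :
    ‖u - g‖ ^ 2 ≤ (sSup {r : ℝ | ∃ v ∈ V, ‖v‖ = 1 ∧ r = ⟪u - g, v⟫}) ^ 2 + B ^ 2 := by
  haveI : CompleteSpace V := hV.completeSpace_coe
  have hpyth := norm_sq_eq_add_norm_sq_projection (u - g) V
  rw [Submodule.coe_norm, Submodule.coe_norm] at hpyth
  have hq : (orthogonalProjection Vᗮ (u - g) : H) = -(orthogonalProjection Vᗮ g : H) := by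
    have h0 : orthogonalProjection Vᗮ (u - g)
        = orthogonalProjection Vᗮ u - orthogonalProjection Vᗮ g := map_sub _ u g
    have h1 : orthogonalProjection Vᗮ u = 0 :=
      Submodule.orthogonalProjectionOnto_apply_of_mem_orthogonal
        (Submodule.le_orthogonal_orthogonal V hu)
    rw [h0, h1]
    push_cast
    simp
  have h1 : ‖(orthogonalProjection V (u - g) : H)‖ ^ 2 ≤
      (sSup {r : ℝ | ∃ v ∈ V, ‖v‖ = 1 ∧ r = ⟪u - g, v⟫}) ^ 2 := by
    by_cases h : (orthogonalProjection V (u - g) : H) = 0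
    · rw [h]; simpa using sq_nonneg _
    · exact pow_le_pow_left₀ (norm_nonneg _) (proj_norm_le_sSup V (u - g) h) 2
  have h2 : ‖(orthogonalProjection Vᗮ (u - g) : H)‖ ^ 2 ≤ B ^ 2 := by
    rw [hq, norm_neg]
    by_cases h : (orthogonalProjection Vᗮ g : H) = 0
    · rw [h]; simpa using sq_nonneg B
    · exact pow_le_pow_left₀ (norm_nonneg _) ((proj_norm_le_sSup Vᗮ g h).trans hB) 2
  linarith
end
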